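/- In the self-consistent (Kaplan–Meier) estimator setup with data e_1, …, e_n, indicators δ_1, …, δ_n ∈ {0,1} satisfying δ_i = 1 whenever e_i = max_j e_j, and real covariates X_1, …, X_n with sample mean X̄ = (1/n)∑_j X_j and at-risk average X̄(u) = (∑_j X_j·1{e_j ≥ u}) / Y(u), the Wilcoxon R-estimating function equals a Kaplan–Meier-weighted logrank estimating function: ∑_{i=1}^n [ δ_i·(F̂(e_i) + F̂(e_i⁻))/2 + (1 − δ_i)·(1 − (1 − F̂(e_i))/2) ]·(X_i − X̄) = −(1/2)·∑_{i=1}^n δ_i·(1 − F̂(e_i⁻))·(X_i − X̄(e_i)). -/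

import Mathlib

open Finset
open scoped Classical

/-- Number at risk at `v`: `Y(v) = #{j : e_j ≥ v}` (as a real number). -/
noncomputable def kmY {n : ℕ} (e : Fin n → ℝ) (v : ℝ) : ℝ :=
  ((Finset.univ.filter fun j => v ≤ e j).card : ℝ)

/-- Number of (uncensored) events at `v`: `d(v) = #{i : e_i = v ∧ δ_i = 1}`. -/
noncomputable def kmD {n : ℕ} (e : Fin n → ℝ) (δ : Fin n → ℝ) (v : ℝ) : ℝ :=
  ((Finset.univ.filter fun i => e i = v ∧ δ i = 1).card : ℝ)

/-- Self-consistent (Kaplan–Meier) estimator: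
`F̂(t) = 1 − ∏_{v ∈ V, v ≤ t} (1 − d(v)/Y(v))`, `V` the set of distinct data values. -/
noncomputable def kmF {n : ℕ} (e : Fin n → ℝ) (δ : Fin n → ℝ) (t : ℝ) : ℝ :=
  1 - ∏ v ∈ (Finset.univ.image e).filter (fun v => v ≤ t), (1 - kmD e δ v / kmY e v)

/-- Left limit of the self-consistent estimator:
`F̂(t⁻) = 1 − ∏_{v ∈ V, v < t} (1 − d(v)/Y(v))`. -/
noncomputable def kmFminus {n : ℕ} (e : Fin n → ℝ) (δ : Fin n → ℝ) (t : ℝ) : ℝ :=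
  1 - ∏ v ∈ (Finset.univ.image e).filter (fun v => v < t), (1 - kmD e δ v / kmY e v)

/-! ### Auxiliary definitions and lemmas -/

/-- One minus the hazard increment: `c(v) = 1 − d(v)/Y(v)`. -/
noncomputable def kmC {n : ℕ} (e : Fin n → ℝ) (δ : Fin n → ℝ) (v : ℝ) : ℝ :=
  1 - kmD e δ v / kmY e v

/-- `Ŝ(t) = ∏_{v ∈ V, v ≤ t} c(v)`. -/
noncomputable def kmSle {n : ℕ} (e : Fin n → ℝ) (δ : Fin n → ℝ) (t : ℝ) : ℝ :=
  ∏ w ∈ (Finset.univ.image e).filter (fun w => w ≤ t), kmC e δ w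

/-- `Ŝ(t⁻) = ∏_{v ∈ V, v < t} c(v)`. -/
noncomputable def kmSlt {n : ℕ} (e : Fin n → ℝ) (δ : Fin n → ℝ) (t : ℝ) : ℝ :=
  ∏ w ∈ (Finset.univ.image e).filter (fun w => w < t), kmC e δ w

lemma kmC_def {n : ℕ} (e : Fin n → ℝ) (δ : Fin n → ℝ) (v : ℝ) :
    kmC e δ v = 1 - kmD e δ v / kmY e v := rfl

lemma kmF_eq {n : ℕ} (e : Fin n → ℝ) (δ : Fin n → ℝ) (t : ℝ) :
    kmF e δ t = 1 - kmSle e δ t := rfl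

lemma kmFminus_eq {n : ℕ} (e : Fin n → ℝ) (δ : Fin n → ℝ) (t : ℝ) :
    kmFminus e δ t = 1 - kmSlt e δ t := rfl

lemma kmSle_fold {n : ℕ} (e : Fin n → ℝ) (δ : Fin n → ℝ) (t : ℝ) :
    (∏ w ∈ (Finset.univ.image e).filter (fun w => w ≤ t), kmC e δ w) = kmSle e δ t := rfl

lemma kmSlt_fold {n : ℕ} (e : Fin n → ℝ) (δ : Fin n → ℝ) (t : ℝ) :
    (∏ w ∈ (Finset.univ.image e).filter (fun w => w < t), kmC e δ w) = kmSlt e δ t := rfl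

/-- Abel-type summation identity over a finite set of reals. -/
lemma km_key (V : Finset ℝ) (c b : ℝ → ℝ) :
    ∑ v ∈ V, (∏ w ∈ V.filter (fun w => w < v), c w) * (∑ w ∈ V.filter (fun w => v ≤ w), b w)
      = (∑ v ∈ V, b v)
        + ∑ v ∈ V, (∏ w ∈ V.filter (fun w => w ≤ v), c w) * (∑ w ∈ V.filter (fun w => v < w), b w) := by
  induction V using Finset.induction_on_min with
  | empty => simp
  | insert a s hmin ih =>
    have ha : a ∉ s := fun h => lt_irrefl a (hmin a h)
    have hL : ∑ v ∈ s, (∏ w ∈ (insert a s).filter (fun w => w < v), c w)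
          * (∑ w ∈ (insert a s).filter (fun w => v ≤ w), b w)
        = c a * ∑ v ∈ s, (∏ w ∈ s.filter (fun w => w < v), c w)
          * (∑ w ∈ s.filter (fun w => v ≤ w), b w) := by
      rw [Finset.mul_sum]
      refine Finset.sum_congr rfl fun v hv => ?_
      have hav := hmin v hv
      rw [Finset.filter_insert, if_pos hav, Finset.filter_insert, if_neg (not_le.2 hav),
        Finset.prod_insert (by simp [ha])]
      ring
    have hR : ∑ v ∈ s, (∏ w ∈ (insert a s).filter (fun w => w ≤ v), c w)
          * (∑ w ∈ (insert a s).filter (fun w => v < w), b w)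
        = c a * ∑ v ∈ s, (∏ w ∈ s.filter (fun w => w ≤ v), c w)
          * (∑ w ∈ s.filter (fun w => v < w), b w) := by
      rw [Finset.mul_sum]
      refine Finset.sum_congr rfl fun v hv => ?_
      have hav := hmin v hv
      rw [Finset.filter_insert, if_pos hav.le, Finset.filter_insert, if_neg (not_lt.2 hav.le),
        Finset.prod_insert (by simp [ha])]
      ring
    have e1 : (insert a s).filter (fun w => w < a) = ∅ := by
      rw [Finset.filter_insert, if_neg (lt_irrefl a)]
      exact Finset.filter_false_of_mem fun w hw => not_lt.2 (hmin w hw).le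
    have e2 : (insert a s).filter (fun w => a ≤ w) = insert a s :=
      Finset.filter_true_of_mem fun w hw => by
        rcases Finset.mem_insert.1 hw with h | h
        · exact h ▸ le_rfl
        · exact (hmin w h).le
    have e3 : (insert a s).filter (fun w => w ≤ a) = {a} := by
      rw [Finset.filter_insert, if_pos le_rfl,
        Finset.filter_false_of_mem fun w hw => not_le.2 (hmin w hw)]
      rfl
    have e4 : (insert a s).filter (fun w => a < w) = s := by
      rw [Finset.filter_insert, if_neg (lt_irrefl a)]
      exact Finset.filter_true_of_mem fun w hw => hmin w hw
    rw [Finset.sum_insert ha, Finset.sum_insert ha, Finset.sum_insert ha, hL, hR, e1, e2, e3, e4,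
      Finset.sum_insert ha, Finset.prod_empty, Finset.prod_singleton]
    linear_combination c a * ih

/-- Summing fiberwise over the distinct values of `e`, restricted by a predicate. -/
lemma fiber_sum {n : ℕ} (e : Fin n → ℝ) (p : ℝ → Prop) (f : Fin n → ℝ) :
    ∑ w ∈ (Finset.univ.image e).filter p, ∑ i ∈ Finset.univ.filter (fun i => e i = w), f i
      = ∑ i ∈ Finset.univ.filter (fun i => p (e i)), f i := by
  rw [Finset.sum_filter, Finset.sum_filter,
    ← Finset.sum_fiberwise_of_maps_to (g := e) (t := Finset.univ.image e)
      (fun i _ => Finset.mem_image_of_mem e (Finset.mem_univ i))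
      (fun i => if p (e i) then f i else 0)]
  refine Finset.sum_congr rfl fun w hw => ?_
  by_cases hpw : p w
  · rw [if_pos hpw]
    exact Finset.sum_congr rfl fun i hi => by rw [(Finset.mem_filter.1 hi).2, if_pos hpw]
  · rw [if_neg hpw]
    exact (Finset.sum_eq_zero fun i hi => by rw [(Finset.mem_filter.1 hi).2, if_neg hpw]).symm

/-- Theorem 3: the Wilcoxon R-estimating function equals the Kaplan–Meier-weighted
logrank estimating function with weight `−(1/2)·Ŝ(u⁻) = −(1/2)·(1 − F̂(u⁻))`:
`∑_i ℛ̂_i (X_i − X̄) = −(1/2) ∑_i δ_i (1 − F̂(e_i⁻)) (X_i − X̄(e_i))`,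
where `X̄ = (1/n) ∑_j X_j` and `X̄(u) = (∑_j X_j 1{e_j ≥ u}) / Y(u)`. -/
theorem wilcoxon_R_eq_weighted_logrank (n : ℕ) (hn : 1 ≤ n)
    (e : Fin n → ℝ) (δ : Fin n → ℝ)
    (hδ : ∀ i, δ i = 0 ∨ δ i = 1)
    (hmax : ∀ i, (∀ j, e j ≤ e i) → δ i = 1)
    (X : Fin n → ℝ) :
    ∑ i, (δ i * ((kmF e δ (e i) + kmFminus e δ (e i)) / 2)
          + (1 - δ i) * (1 - (1 - kmF e δ (e i)) / 2))
        * (X i - (1 / (n : ℝ)) * ∑ j, X j)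
      = -(1 / 2) * ∑ i, δ i * (1 - kmFminus e δ (e i))
          * (X i - (∑ j, X j * (if e i ≤ e j then (1 : ℝ) else 0)) / kmY e (e i)) := by
  classical
  have hn0 : (n : ℝ) ≠ 0 := Nat.cast_ne_zero.2 (by omega)
  set M : ℝ := 1 / (n : ℝ) * ∑ j, X j with hM
  have hsum0 : ∑ i, (X i - M) = 0 := by
    rw [Finset.sum_sub_distrib, Finset.sum_const, Finset.card_univ, Fintype.card_fin,
      nsmul_eq_mul, hM]
    field_simp
    ring
  have hmaps : ∀ i ∈ (Finset.univ : Finset (Fin n)), e i ∈ Finset.univ.image e :=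
    fun i _ => Finset.mem_image_of_mem e (Finset.mem_univ i)
  -- the key identity
  have h : ∑ i, kmSle e δ (e i) * (X i - M)
      = ∑ i, δ i * (kmSlt e δ (e i)
          * (M - (∑ j, X j * (if e i ≤ e j then (1 : ℝ) else 0)) / kmY e (e i))) := by
    have hY : ∀ v ∈ Finset.univ.image e, kmY e v ≠ 0 := by
      intro v hv
      obtain ⟨i, -, rfl⟩ := Finset.mem_image.1 hv
      have : i ∈ Finset.univ.filter fun j => e i ≤ e j :=
        Finset.mem_filter.2 ⟨Finset.mem_univ i, le_rfl⟩
      have hcard : 0 < (Finset.univ.filter fun j => e i ≤ e j).card :=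
        Finset.card_pos.2 ⟨i, this⟩
      simp only [kmY]
      exact_mod_cast hcard.ne'
    have hA : ∑ i, kmSle e δ (e i) * (X i - M)
        = ∑ v ∈ Finset.univ.image e,
            kmSle e δ v * ∑ i ∈ Finset.univ.filter (fun i => e i = v), (X i - M) := by
      rw [← Finset.sum_fiberwise_of_maps_to hmaps (fun i => kmSle e δ (e i) * (X i - M))]
      refine Finset.sum_congr rfl fun v hv => ?_
      rw [Finset.mul_sum]
      exact Finset.sum_congr rfl fun i hi => by rw [(Finset.mem_filter.1 hi).2]
    have hd : ∀ v : ℝ, ∑ i ∈ Finset.univ.filter (fun i => e i = v), δ i = kmD e δ v := by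
      intro v
      calc ∑ i ∈ Finset.univ.filter (fun i => e i = v), δ i
          = ∑ i ∈ Finset.univ.filter (fun i => e i = v), if δ i = 1 then (1 : ℝ) else 0 :=
            Finset.sum_congr rfl fun i _ => by rcases hδ i with h | h <;> simp [h]
        _ = (((Finset.univ.filter (fun i => e i = v)).filter (fun i => δ i = 1)).card : ℝ) :=
            by rw [Finset.sum_boole]
        _ = kmD e δ v := by rw [Finset.filter_filter, kmD]
    have hC : ∑ i, δ i * (kmSlt e δ (e i)
          * (M - (∑ j, X j * (if e i ≤ e j then (1 : ℝ) else 0)) / kmY e (e i)))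
        = ∑ v ∈ Finset.univ.image e, kmD e δ v * (kmSlt e δ v
            * (M - (∑ j, X j * (if v ≤ e j then (1 : ℝ) else 0)) / kmY e v)) := by
      rw [← Finset.sum_fiberwise_of_maps_to hmaps (fun i => δ i * (kmSlt e δ (e i)
          * (M - (∑ j, X j * (if e i ≤ e j then (1 : ℝ) else 0)) / kmY e (e i))))]
      refine Finset.sum_congr rfl fun v hv => ?_
      rw [← hd v, Finset.sum_mul]
      exact Finset.sum_congr rfl fun i hi => by rw [(Finset.mem_filter.1 hi).2]
    have hBf : ∀ v : ℝ,
        (∑ w ∈ (Finset.univ.image e).filter (fun w => v ≤ w),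
            ∑ i ∈ Finset.univ.filter (fun i => e i = w), (X i - M))
          = (∑ j, X j * (if v ≤ e j then (1 : ℝ) else 0)) - kmY e v * M := by
      intro v
      rw [fiber_sum, Finset.sum_sub_distrib, Finset.sum_const, nsmul_eq_mul]
      congr 1
      rw [Finset.sum_filter]
      exact Finset.sum_congr rfl fun j _ => by by_cases h : v ≤ e j <;> simp [h]
    have hsplitB : ∀ v ∈ Finset.univ.image e,
        (Finset.univ.image e).filter (fun w => v ≤ w)
          = insert v ((Finset.univ.image e).filter (fun w => v < w)) := by
      intro v hv
      ext w
      simp only [Finset.mem_filter, Finset.mem_insert]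
      constructor
      · rintro ⟨hw, hle⟩
        rcases eq_or_lt_of_le hle with h | h
        · exact Or.inl h.symm
        · exact Or.inr ⟨hw, h⟩
      · rintro (rfl | ⟨hw, hlt⟩)
        · exact ⟨hv, le_rfl⟩
        · exact ⟨hw, hlt.le⟩
    have hsplitP : ∀ v ∈ Finset.univ.image e, kmSle e δ v = kmC e δ v * kmSlt e δ v := by
      intro v hv
      have hvv : v ∉ (Finset.univ.image e).filter (fun w => v < w) := by simp
      have : (Finset.univ.image e).filter (fun w => w ≤ v)
          = insert v ((Finset.univ.image e).filter (fun w => w < v)) := by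
        ext w
        simp only [Finset.mem_filter, Finset.mem_insert]
        constructor
        · rintro ⟨hw, hle⟩
          rcases eq_or_lt_of_le hle with h | h
          · exact Or.inl h
          · exact Or.inr ⟨hw, h⟩
        · rintro (rfl | ⟨hw, hlt⟩)
          · exact ⟨hv, le_rfl⟩
          · exact ⟨hw, hlt.le⟩
      rw [kmSle, this, Finset.prod_insert (by simp), kmSlt]
    have hper : ∀ v ∈ Finset.univ.image e,
        kmD e δ v * (kmSlt e δ v
            * (M - (∑ j, X j * (if v ≤ e j then (1 : ℝ) else 0)) / kmY e v))
          = kmSle e δ v * (∑ w ∈ (Finset.univ.image e).filter (fun w => v ≤ w),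
                ∑ i ∈ Finset.univ.filter (fun i => e i = w), (X i - M))
            - kmSlt e δ v * (∑ w ∈ (Finset.univ.image e).filter (fun w => v ≤ w),
                ∑ i ∈ Finset.univ.filter (fun i => e i = w), (X i - M)) := by
      intro v hv
      have hY' := hY v hv
      have hdY : kmD e δ v = kmY e v - kmY e v * kmC e δ v := by
        rw [kmC_def]; field_simp; ring
      rw [hBf v, hsplitP v hv, hdY]
      field_simp
      ring
    have hbsplit : ∀ v ∈ Finset.univ.image e,
        kmSle e δ v * (∑ i ∈ Finset.univ.filter (fun i => e i = v), (X i - M))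
          = kmSle e δ v * (∑ w ∈ (Finset.univ.image e).filter (fun w => v ≤ w),
                ∑ i ∈ Finset.univ.filter (fun i => e i = w), (X i - M))
            - kmSle e δ v * (∑ w ∈ (Finset.univ.image e).filter (fun w => v < w),
                ∑ i ∈ Finset.univ.filter (fun i => e i = w), (X i - M)) := by
      intro v hv
      rw [hsplitB v hv, Finset.sum_insert (by simp)]
      ring
    have hVb0 : ∑ v ∈ Finset.univ.image e,
        (∑ i ∈ Finset.univ.filter (fun i => e i = v), (X i - M)) = 0 :=
      (Finset.sum_fiberwise_of_maps_to hmaps (fun i => X i - M)).trans hsum0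
    have hkey := km_key (Finset.univ.image e) (kmC e δ)
      (fun w => ∑ i ∈ Finset.univ.filter (fun i => e i = w), (X i - M))
    simp only [kmSle_fold, kmSlt_fold] at hkey
    refine hA.trans (Eq.trans ?_ hC.symm)
    rw [Finset.sum_congr rfl hper, Finset.sum_congr rfl hbsplit,
      Finset.sum_sub_distrib, Finset.sum_sub_distrib]
    linear_combination hkey + hVb0
  -- assemble the theorem from `h` and `hsum0`
  have hS : ∑ i, δ i * (1 - kmFminus e δ (e i))
        * (X i - (∑ j, X j * (if e i ≤ e j then (1 : ℝ) else 0)) / kmY e (e i))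
      = (∑ i, δ i * (kmSlt e δ (e i) * (X i - M)))
        + ∑ i, δ i * (kmSlt e δ (e i)
            * (M - (∑ j, X j * (if e i ≤ e j then (1 : ℝ) else 0)) / kmY e (e i))) := by
    rw [← Finset.sum_add_distrib]
    refine Finset.sum_congr rfl fun i _ => ?_
    rw [kmFminus_eq]
    ring
  calc ∑ i, (δ i * ((kmF e δ (e i) + kmFminus e δ (e i)) / 2)
          + (1 - δ i) * (1 - (1 - kmF e δ (e i)) / 2)) * (X i - M)
      = ∑ i, ((X i - M) - 1 / 2 * (kmSle e δ (e i) * (X i - M))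
          - 1 / 2 * (δ i * (kmSlt e δ (e i) * (X i - M)))) := by
        refine Finset.sum_congr rfl fun i _ => ?_
        rw [kmF_eq, kmFminus_eq]
        ring
    _ = (∑ i, (X i - M)) - 1 / 2 * ∑ i, kmSle e δ (e i) * (X i - M)
          - 1 / 2 * ∑ i, δ i * (kmSlt e δ (e i) * (X i - M)) := by
        rw [Finset.sum_sub_distrib, Finset.sum_sub_distrib, Finset.mul_sum, Finset.mul_sum]
    _ = -(1 / 2) * ∑ i, δ i * (1 - kmFminus e δ (e i))
          * (X i - (∑ j, X j * (if e i ≤ e j then (1 : ℝ) else 0)) / kmY e (e i)) := by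
        rw [hS]
        linear_combination hsum0 - (1 / 2 : ℝ) * h
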